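/- (SSAM contraction on identical examples.) Let f : ℝ^d → ℝ be differentiable, μ-strongly convex and L-smooth with 0 < μ ≤ L, let ρ > 0, let 0 < γ ≤ γ_upp < 1, and let the learning rate η > 0 satisfy η ≤ (1/γ_upp)·[2/(μ+L) − (μ+L)/(2μL(μ/(ρL²) + 1))]. For w, v ∈ ℝ^d define the SSAM updates w' = w − γη∇f(w + ρ∇f(w)) and v' = v − γη∇f(v + ρ∇f(v)). Then ‖v' − w'‖ ≤ (1 − (1 + μρ)·γημL/(μ+L))·‖v − w‖. -/

import Mathlib

open RealInnerProductSpace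

section Aux

variable {E : Type*} [NormedAddCommGroup E] [InnerProductSpace ℝ E] [CompleteSpace E]

private lemma ssam_line_hasDerivAt (f : E → ℝ) (hdiff : Differentiable ℝ f) (x u : E) (t : ℝ) :
    HasDerivAt (fun s : ℝ => f (x + s • u)) ⟪gradient f (x + t • u), u⟫ t := by
  have hline : HasDerivAt (fun s : ℝ => x + s • u) u t := by
    simpa using ((hasDerivAt_id t).smul_const u).const_add x
  have hf : HasFDerivAt f (InnerProductSpace.toDual ℝ E (gradient f (x + t • u))) (x + t • u) :=
    (hdiff (x + t • u)).hasGradientAt.hasFDerivAt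
  have := hf.comp_hasDerivAt t hline
  rw [InnerProductSpace.toDual_apply_apply] at this
  exact this

private lemma ssam_lower_quad (f : E → ℝ) (μ : ℝ) (hμ : 0 ≤ μ)
    (hdiff : Differentiable ℝ f)
    (hsc : ∀ a b : E, μ * ‖a - b‖ ^ 2 ≤ ⟪gradient f a - gradient f b, a - b⟫) :
    ∀ x y : E, f x + ⟪gradient f x, y - x⟫ + μ / 2 * ‖y - x‖ ^ 2 ≤ f y := by
  intro x y
  set u := y - x with hu
  set g : ℝ → ℝ :=
    fun t => f (x + t • u) - t * ⟪gradient f x, u⟫ - μ / 2 * t ^ 2 * ‖u‖ ^ 2 with hg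
  have hderiv : ∀ t : ℝ,
      HasDerivAt g (⟪gradient f (x + t • u) - gradient f x, u⟫ - μ * t * ‖u‖ ^ 2) t := by
    intro t
    have h1 := ssam_line_hasDerivAt f hdiff x u t
    have h2 : HasDerivAt (fun t : ℝ => t * ⟪gradient f x, u⟫) ⟪gradient f x, u⟫ t :=
      hasDerivAt_mul_const _
    have h3 : HasDerivAt (fun t : ℝ => μ / 2 * t ^ 2 * ‖u‖ ^ 2) (μ * t * ‖u‖ ^ 2) t := by
      have := ((hasDerivAt_pow 2 t).const_mul (μ / 2)).mul_const (‖u‖ ^ 2)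
      exact this.congr_deriv (by push_cast; ring)
    have := (h1.sub h2).sub h3
    exact this.congr_deriv (by rw [inner_sub_left])
  have hmono : MonotoneOn g (Set.Icc (0 : ℝ) 1) := by
    apply monotoneOn_of_deriv_nonneg (convex_Icc 0 1)
    · exact fun t _ => (hderiv t).continuousAt.continuousWithinAt
    · exact fun t _ => (hderiv t).differentiableAt.differentiableWithinAt
    · intro t ht
      rw [interior_Icc] at ht
      rw [(hderiv t).deriv]
      have key := hsc (x + t • u) x
      have hxx : x + t • u - x = t • u := by abel
      rw [hxx, inner_smul_right, norm_smul] at key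
      have ht0 : 0 < t := ht.1
      rw [Real.norm_eq_abs, abs_of_pos ht0] at key
      have : μ * t * ‖u‖ ^ 2 ≤ ⟪gradient f (x + t • u) - gradient f x, u⟫ := by
        have h' : μ * (t * ‖u‖) ^ 2 ≤ t * ⟪gradient f (x + t • u) - gradient f x, u⟫ := key
        nlinarith [sq_nonneg ‖u‖]
      linarith
  have h01 := hmono (Set.mem_Icc.2 ⟨le_refl 0, zero_le_one⟩)
    (Set.mem_Icc.2 ⟨zero_le_one, le_refl 1⟩) zero_le_one
  have hg0 : g 0 = f x := by simp [hg]
  have hg1 : g 1 = f y - ⟪gradient f x, u⟫ - μ / 2 * ‖u‖ ^ 2 := by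
    simp [hg, hu]
  rw [hg0, hg1] at h01
  linarith

private lemma ssam_upper_quad (f : E → ℝ) (L : ℝ) (hL : 0 ≤ L)
    (hdiff : Differentiable ℝ f)
    (hsm : ∀ a b : E, ‖gradient f a - gradient f b‖ ≤ L * ‖a - b‖) :
    ∀ x y : E, f y ≤ f x + ⟪gradient f x, y - x⟫ + L / 2 * ‖y - x‖ ^ 2 := by
  intro x y
  set u := y - x with hu
  set g : ℝ → ℝ :=
    fun t => f (x + t • u) - t * ⟪gradient f x, u⟫ - L / 2 * t ^ 2 * ‖u‖ ^ 2 with hg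
  have hderiv : ∀ t : ℝ,
      HasDerivAt g (⟪gradient f (x + t • u) - gradient f x, u⟫ - L * t * ‖u‖ ^ 2) t := by
    intro t
    have h1 := ssam_line_hasDerivAt f hdiff x u t
    have h2 : HasDerivAt (fun t : ℝ => t * ⟪gradient f x, u⟫) ⟪gradient f x, u⟫ t :=
      hasDerivAt_mul_const _
    have h3 : HasDerivAt (fun t : ℝ => L / 2 * t ^ 2 * ‖u‖ ^ 2) (L * t * ‖u‖ ^ 2) t := by
      have := ((hasDerivAt_pow 2 t).const_mul (L / 2)).mul_const (‖u‖ ^ 2)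
      exact this.congr_deriv (by push_cast; ring)
    have := (h1.sub h2).sub h3
    exact this.congr_deriv (by rw [inner_sub_left])
  have hanti : AntitoneOn g (Set.Icc (0 : ℝ) 1) := by
    apply antitoneOn_of_deriv_nonpos (convex_Icc 0 1)
    · exact fun t _ => (hderiv t).continuousAt.continuousWithinAt
    · exact fun t _ => (hderiv t).differentiableAt.differentiableWithinAt
    · intro t ht
      rw [interior_Icc] at ht
      rw [(hderiv t).deriv]
      have key := hsm (x + t • u) x
      have hxx : x + t • u - x = t • u := by abel
      rw [hxx, norm_smul] at key
      have ht0 : 0 < t := ht.1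
      rw [Real.norm_eq_abs, abs_of_pos ht0] at key
      have hcs : ⟪gradient f (x + t • u) - gradient f x, u⟫
          ≤ ‖gradient f (x + t • u) - gradient f x‖ * ‖u‖ := real_inner_le_norm _ _
      have : ⟪gradient f (x + t • u) - gradient f x, u⟫ ≤ L * t * ‖u‖ ^ 2 := by
        nlinarith [norm_nonneg u, norm_nonneg (gradient f (x + t • u) - gradient f x)]
      linarith
  have h01 := hanti (Set.mem_Icc.2 ⟨le_refl 0, zero_le_one⟩)
    (Set.mem_Icc.2 ⟨zero_le_one, le_refl 1⟩) zero_le_one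
  have hg0 : g 0 = f x := by simp [hg]
  have hg1 : g 1 = f y - ⟪gradient f x, u⟫ - L / 2 * ‖u‖ ^ 2 := by
    simp [hg, hu]
  rw [hg0, hg1] at h01
  linarith

/-- Abstract cocoercivity (Baillon–Haddad) from convexity + descent lemma. -/
private lemma ssam_cocoercive (p : E → ℝ) (P : E → E) (c : ℝ) (hc : 0 < c)
    (hconv : ∀ x y : E, p x + ⟪P x, y - x⟫ ≤ p y)
    (hdesc : ∀ x y : E, p y ≤ p x + ⟪P x, y - x⟫ + c / 2 * ‖y - x‖ ^ 2) :
    ∀ x y : E, ‖P y - P x‖ ^ 2 / c ≤ ⟪P y - P x, y - x⟫ := by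
  have one : ∀ x y : E, p x + ⟪P x, y - x⟫ + ‖P y - P x‖ ^ 2 / (2 * c) ≤ p y := by
    intro x y
    set z := y - c⁻¹ • (P y - P x) with hz
    have h1 := hconv x z
    have h2 := hdesc y z
    have hzy : z - y = -(c⁻¹ • (P y - P x)) := by rw [hz]; abel
    have hzx : z - x = (y - x) - c⁻¹ • (P y - P x) := by rw [hz]; abel
    rw [hzy] at h2
    rw [hzx] at h1
    rw [inner_sub_right, inner_smul_right] at h1
    rw [inner_neg_right, inner_smul_right, norm_neg, norm_smul] at h2
    have hsplit : ⟪P y, P y - P x⟫ - ⟪P x, P y - P x⟫ = ‖P y - P x‖ ^ 2 := by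
      rw [← inner_sub_left, real_inner_self_eq_norm_sq]
    rw [Real.norm_eq_abs, abs_of_pos (inv_pos.2 hc)] at h2
    have hc' : c ≠ 0 := ne_of_gt hc
    have hexp : c / 2 * (c⁻¹ * ‖P y - P x‖) ^ 2 = ‖P y - P x‖ ^ 2 / (2 * c) := by
      field_simp
    rw [hexp] at h2
    have h4 : c⁻¹ * (⟪P y, P y - P x⟫ - ⟪P x, P y - P x⟫) = c⁻¹ * ‖P y - P x‖ ^ 2 := by
      rw [hsplit]
    have hid : c⁻¹ * ‖P y - P x‖ ^ 2
        = ‖P y - P x‖ ^ 2 / (2 * c) + ‖P y - P x‖ ^ 2 / (2 * c) := by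
      field_simp
      ring
    ring_nf at h4 h1 h2 hid ⊢
    linarith [h1, h2, h4, hid]
  intro x y
  have a := one x y
  have b := one y x
  have e1 : ⟪P y, x - y⟫ = -⟪P y, y - x⟫ := by rw [← inner_neg_right]; congr 1; abel
  have e2 : ⟪P y, y - x⟫ - ⟪P x, y - x⟫ = ⟪P y - P x, y - x⟫ := by rw [inner_sub_left]
  have e3 : ‖P x - P y‖ = ‖P y - P x‖ := by rw [← norm_neg]; congr 1; abel
  rw [e1, e3] at b
  have hc2 : (0:ℝ) < 2 * c := by linarith
  have : ‖P y - P x‖ ^ 2 / (2 * c) + ‖P y - P x‖ ^ 2 / (2 * c) ≤ ⟪P y - P x, y - x⟫ := by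
    nlinarith [a, b, e2]
  have heq : ‖P y - P x‖ ^ 2 / (2 * c) + ‖P y - P x‖ ^ 2 / (2 * c) = ‖P y - P x‖ ^ 2 / c := by
    field_simp
    ring
  linarith [heq ▸ this]

/-- Interpolation/coercivity inequality for a `μ`-strongly convex, `L`-smooth function. -/
private lemma ssam_coercive (f : E → ℝ) (μ L : ℝ) (hμ : 0 < μ) (hμL : μ ≤ L)
    (hdiff : Differentiable ℝ f)
    (hsc : ∀ a b : E, μ * ‖a - b‖ ^ 2 ≤ ⟪gradient f a - gradient f b, a - b⟫)
    (hsm : ∀ a b : E, ‖gradient f a - gradient f b‖ ≤ L * ‖a - b‖) :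
    ∀ x y : E, μ * L / (μ + L) * ‖y - x‖ ^ 2
        + 1 / (μ + L) * ‖gradient f y - gradient f x‖ ^ 2
      ≤ ⟪gradient f y - gradient f x, y - x⟫ := by
  intro x y
  have hμL0 : (0:ℝ) < μ + L := by linarith
  rcases eq_or_lt_of_le hμL with heq | hlt
  · -- μ = L : pointwise consequence of hsc and hsm
    subst heq
    have h1 := hsc y x
    have h2 := hsm y x
    have hn : (0:ℝ) ≤ ‖y - x‖ := norm_nonneg _
    have hg : (0:ℝ) ≤ ‖gradient f y - gradient f x‖ := norm_nonneg _
    have key : ‖gradient f y - gradient f x‖ ^ 2 ≤ μ ^ 2 * ‖y - x‖ ^ 2 := by nlinarith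
    have hpos : (0:ℝ) < μ + μ := by linarith
    have k1 : 1 / (μ + μ) * ‖gradient f y - gradient f x‖ ^ 2
        ≤ 1 / (μ + μ) * (μ ^ 2 * ‖y - x‖ ^ 2) :=
      mul_le_mul_of_nonneg_left key (by positivity)
    have k2 : μ * μ / (μ + μ) * ‖y - x‖ ^ 2 + 1 / (μ + μ) * (μ ^ 2 * ‖y - x‖ ^ 2)
        = μ * ‖y - x‖ ^ 2 := by
      field_simp
    linarith [h1, k1, k2]
  · -- μ < L : apply cocoercivity to p = f - μ/2 ‖·‖²
    set c := L - μ with hcdef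
    have hc : 0 < c := by rw [hcdef]; linarith
    set p : E → ℝ := fun x => f x - μ / 2 * ‖x‖ ^ 2 with hp
    set P : E → E := fun x => gradient f x - μ • x with hP
    have hlow := ssam_lower_quad f μ hμ.le hdiff hsc
    have hupp := ssam_upper_quad f L (by linarith) hdiff hsm
    have hnorm : ∀ a b : E, ‖a - b‖ ^ 2 = ‖a‖ ^ 2 - 2 * ⟪b, a⟫ + ‖b‖ ^ 2 := by
      intro a b
      rw [norm_sub_sq_real, real_inner_comm]
    have hPin : ∀ a b : E, ⟪P a, b - a⟫ = ⟪gradient f a, b - a⟫ - μ * (⟪a, b⟫ - ‖a‖ ^ 2) := by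
      intro a b
      simp only [hP, inner_sub_left, real_inner_smul_left, inner_sub_right,
        real_inner_self_eq_norm_sq]
      ring
    have hconv : ∀ a b : E, p a + ⟪P a, b - a⟫ ≤ p b := by
      intro a b
      have := hlow a b
      have hn := hnorm b a
      rw [hp]
      simp only
      rw [hPin a b]
      nlinarith [this, hn]
    have hdesc : ∀ a b : E, p b ≤ p a + ⟪P a, b - a⟫ + c / 2 * ‖b - a‖ ^ 2 := by
      intro a b
      have := hupp a b
      have hn := hnorm b a
      rw [hp]
      simp only
      rw [hPin a b]
      have hc2 : c / 2 * ‖b - a‖ ^ 2 = L / 2 * ‖b - a‖ ^ 2 - μ / 2 * ‖b - a‖ ^ 2 := by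
        rw [hcdef]; ring
      nlinarith [this, hn]
    have hco := ssam_cocoercive p P c hc hconv hdesc x y
    have hPdiff : P y - P x = (gradient f y - gradient f x) - μ • (y - x) := by
      rw [hP]
      simp only [smul_sub]
      abel
    rw [hPdiff] at hco
    set G := gradient f y - gradient f x with hG
    set dvec := y - x with hd
    have hn1 : ‖G - μ • dvec‖ ^ 2 = ‖G‖ ^ 2 - 2 * μ * ⟪G, dvec⟫ + μ ^ 2 * ‖dvec‖ ^ 2 := by
      rw [norm_sub_sq_real, real_inner_smul_right, norm_smul]
      rw [Real.norm_eq_abs, abs_of_pos hμ]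
      ring
    have hn2 : ⟪G - μ • dvec, dvec⟫ = ⟪G, dvec⟫ - μ * ‖dvec‖ ^ 2 := by
      rw [inner_sub_left, real_inner_smul_left, real_inner_self_eq_norm_sq]
    rw [hn1, hn2] at hco
    have hco' : ‖G‖ ^ 2 - 2 * μ * ⟪G, dvec⟫ + μ ^ 2 * ‖dvec‖ ^ 2
        ≤ (⟪G, dvec⟫ - μ * ‖dvec‖ ^ 2) * c := (div_le_iff₀ hc).1 hco
    have target : μ * L * ‖dvec‖ ^ 2 + ‖G‖ ^ 2 ≤ (μ + L) * ⟪G, dvec⟫ := by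
      rw [hcdef] at hco'
      nlinarith [hco']
    rw [← sub_nonneg]
    have hkey : ⟪G, dvec⟫ - (μ * L / (μ + L) * ‖dvec‖ ^ 2 + 1 / (μ + L) * ‖G‖ ^ 2)
        = ((μ + L) * ⟪G, dvec⟫ - (μ * L * ‖dvec‖ ^ 2 + ‖G‖ ^ 2)) / (μ + L) := by
      field_simp
    rw [hkey]
    apply div_nonneg _ hμL0.le
    linarith [target]

end Aux

set_option maxHeartbeats 1000000 in
/-- SSAM contraction on identical examples: if
`η ≤ (1/γ_upp)[2/(μ+L) − (μ+L)/(2μL(μ/(ρL²) + 1))]` and `0 < γ ≤ γ_upp < 1`,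
then the SSAM updates `w' = w − γη∇f(w + ρ∇f w)` and
`v' = v − γη∇f(v + ρ∇f v)` satisfy
`‖v' − w'‖ ≤ (1 − (1 + μρ)γημL/(μ+L))‖v − w‖`. -/
theorem ssam_contraction_same_example {d : ℕ}
    (f : EuclideanSpace ℝ (Fin d) → ℝ) (μ L ρ η γ γupp : ℝ)
    (hμ : 0 < μ) (hμL : μ ≤ L) (hρ : 0 < ρ) (hη : 0 < η)
    (hγ0 : 0 < γ) (hγupp : γ ≤ γupp) (hγupp1 : γupp < 1)
    (hηle : η ≤ (1 / γupp) *
      (2 / (μ + L) - (μ + L) / (2 * μ * L * (μ / (ρ * L ^ 2) + 1))))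
    (hdiff : Differentiable ℝ f)
    (hsc : ∀ v w : EuclideanSpace ℝ (Fin d),
      μ * ‖v - w‖ ^ 2 ≤ ⟪gradient f v - gradient f w, v - w⟫)
    (hsm : ∀ v w : EuclideanSpace ℝ (Fin d),
      ‖gradient f v - gradient f w‖ ≤ L * ‖v - w‖)
    (w v : EuclideanSpace ℝ (Fin d)) :
    ‖(v - (γ * η) • gradient f (v + ρ • gradient f v))
        - (w - (γ * η) • gradient f (w + ρ • gradient f w))‖
      ≤ (1 - (1 + μ * ρ) * γ * η * μ * L / (μ + L)) * ‖v - w‖ := by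
  have hγupp0 : 0 < γupp := lt_of_lt_of_le hγ0 hγupp
  have hL : 0 < L := lt_of_lt_of_le hμ hμL
  have hμL0 : (0:ℝ) < μ + L := by linarith
  set s := γ * η with hsdef
  have hs : 0 < s := mul_pos hγ0 hη
  set t0 : ℝ := ρ * L * (μ + L) / (2 * μ * (μ + ρ * L ^ 2)) with ht0def
  have hden : (0:ℝ) < μ + ρ * L ^ 2 := by positivity
  have ht0 : 0 < t0 := by rw [ht0def]; positivity
  have hBeq : (μ + L) / (2 * μ * L * (μ / (ρ * L ^ 2) + 1)) = t0 := by
    rw [ht0def]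
    field_simp
  have hst : s ≤ 2 / (μ + L) - t0 := by
    have h1 : γ * η ≤ γupp * η := mul_le_mul_of_nonneg_right hγupp hη.le
    have h2 : γupp * η ≤ γupp * ((1 / γupp) *
        (2 / (μ + L) - (μ + L) / (2 * μ * L * (μ / (ρ * L ^ 2) + 1)))) :=
      mul_le_mul_of_nonneg_left hηle hγupp0.le
    have h3 : γupp * ((1 / γupp) *
        (2 / (μ + L) - (μ + L) / (2 * μ * L * (μ / (ρ * L ^ 2) + 1))))
        = 2 / (μ + L) - (μ + L) / (2 * μ * L * (μ / (ρ * L ^ 2) + 1)) := by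
      field_simp
    rw [h3, hBeq] at h2
    rw [hsdef]
    linarith
  set Dv := v + ρ • gradient f v with hDv
  set Dw := w + ρ • gradient f w with hDw
  set δ := v - w with hδ
  set e := gradient f v - gradient f w with he
  set Δ := gradient f Dv - gradient f Dw with hΔ
  set κ := μ * L / (μ + L) with hκdef
  set m := (1 + μ * ρ) * μ * L / (μ + L) with hmdef
  have hκ0 : 0 ≤ κ := by rw [hκdef]; positivity
  have hm0 : 0 ≤ m := by
    rw [hmdef]
    have : (0:ℝ) ≤ 1 + μ * ρ := by positivity
    positivity
  have hvec : v - s • gradient f Dv - (w - s • gradient f Dw) = δ - s • Δ := by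
    rw [hΔ, hδ, smul_sub]
    abel
  rw [hvec]
  have hco := ssam_coercive f μ L hμ hμL hdiff hsc hsm Dw Dv
  rw [← hΔ, ← hκdef] at hco
  have hD : Dv - Dw = δ + ρ • e := by
    rw [hDv, hDw, hδ, he, smul_sub]
    abel
  have hDn : ‖Dv - Dw‖ ^ 2 = ‖δ‖ ^ 2 + 2 * (ρ * ⟪δ, e⟫) + ρ ^ 2 * ‖e‖ ^ 2 := by
    rw [hD, norm_add_sq_real, real_inner_smul_right, norm_smul, Real.norm_eq_abs,
      abs_of_pos hρ]
    ring
  have hip : ⟪Δ, δ⟫ = ⟪Δ, Dv - Dw⟫ - ρ * ⟪Δ, e⟫ := by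
    rw [hD, inner_add_right, real_inner_smul_right]
    ring
  have hXn : ‖δ - s • Δ‖ ^ 2 = ‖δ‖ ^ 2 - 2 * (s * ⟪Δ, δ⟫) + s ^ 2 * ‖Δ‖ ^ 2 := by
    rw [norm_sub_sq_real, real_inner_smul_right, norm_smul, Real.norm_eq_abs,
      abs_of_pos hs, real_inner_comm δ Δ]
    ring
  have hi1 : μ * ‖δ‖ ^ 2 ≤ ⟪e, δ⟫ := hsc v w
  have hb : ‖e‖ ≤ L * ‖δ‖ := hsm v w
  have hb2 : ‖e‖ ^ 2 ≤ L ^ 2 * ‖δ‖ ^ 2 := by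
    have h := pow_le_pow_left₀ (norm_nonneg e) hb 2
    rw [mul_pow] at h
    exact h
  have hcs : ⟪Δ, e⟫ ≤ ‖Δ‖ * ‖e‖ := real_inner_le_norm _ _
  -- AM-GM with parameter t0
  have hAM : 2 * ρ * (‖e‖ * ‖Δ‖) ≤ ρ ^ 2 / t0 * ‖e‖ ^ 2 + t0 * ‖Δ‖ ^ 2 := by
    have key : 2 * ρ * (‖e‖ * ‖Δ‖) * t0 ≤ ρ ^ 2 * ‖e‖ ^ 2 + t0 ^ 2 * ‖Δ‖ ^ 2 := by
      nlinarith [sq_nonneg (ρ * ‖e‖ - t0 * ‖Δ‖)]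
    have h2 : 2 * ρ * (‖e‖ * ‖Δ‖) ≤ (ρ ^ 2 * ‖e‖ ^ 2 + t0 ^ 2 * ‖Δ‖ ^ 2) / t0 := by
      rw [le_div_iff₀ ht0]
      linarith
    have h3 : (ρ ^ 2 * ‖e‖ ^ 2 + t0 ^ 2 * ‖Δ‖ ^ 2) / t0
        = ρ ^ 2 / t0 * ‖e‖ ^ 2 + t0 * ‖Δ‖ ^ 2 := by
      field_simp
    linarith [h3 ▸ h2]
  have hρt0 : ρ ^ 2 / t0 = 2 * κ * ρ ^ 2 + 2 * κ * ρ * μ / L ^ 2 := by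
    rw [ht0def, hκdef]
    field_simp
    ring
  have hstep : κ * ‖δ‖ ^ 2 + 2 * κ * ρ * ⟪e, δ⟫ + κ * ρ ^ 2 * ‖e‖ ^ 2
      + 1 / (μ + L) * ‖Δ‖ ^ 2 - ρ * (‖Δ‖ * ‖e‖) ≤ ⟪Δ, δ⟫ := by
    have h2 : ρ * ⟪Δ, e⟫ ≤ ρ * (‖Δ‖ * ‖e‖) := mul_le_mul_of_nonneg_left hcs hρ.le
    rw [hDn, real_inner_comm e δ] at hco
    rw [hip]
    nlinarith [hco, h2]
  have f1 : t0 * ‖Δ‖ ^ 2 + s * ‖Δ‖ ^ 2 ≤ 2 * (1 / (μ + L)) * ‖Δ‖ ^ 2 := by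
    have h2L : 2 / (μ + L) = 2 * (1 / (μ + L)) := by ring
    have := mul_le_mul_of_nonneg_right (show s + t0 ≤ 2 * (1 / (μ + L)) by linarith [h2L])
      (sq_nonneg ‖Δ‖)
    linarith
  have g1 : 2 * κ * ρ * (μ * ‖δ‖ ^ 2) ≤ 2 * κ * ρ * ⟪e, δ⟫ :=
    mul_le_mul_of_nonneg_left hi1 (by positivity)
  have hbL : ‖e‖ ^ 2 / L ^ 2 ≤ ‖δ‖ ^ 2 := by
    rw [div_le_iff₀ (by positivity)]
    linarith [hb2]
  have g2 : 2 * κ * ρ * μ * (‖e‖ ^ 2 / L ^ 2) ≤ 2 * κ * ρ * μ * ‖δ‖ ^ 2 :=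
    mul_le_mul_of_nonneg_left hbL (by positivity)
  have hρt0b : ρ ^ 2 / t0 * ‖e‖ ^ 2
      = 2 * κ * ρ ^ 2 * ‖e‖ ^ 2 + 2 * κ * ρ * μ * (‖e‖ ^ 2 / L ^ 2) := by
    rw [hρt0]
    ring
  have g3 : ρ ^ 2 / t0 * ‖e‖ ^ 2 ≤ 2 * κ * ρ ^ 2 * ‖e‖ ^ 2 + 2 * κ * ρ * μ * ‖δ‖ ^ 2 := by
    linarith [hρt0b, g2]
  have hm2 : 2 * m * ‖δ‖ ^ 2 = 2 * κ * ‖δ‖ ^ 2 + 2 * μ * ρ * κ * ‖δ‖ ^ 2 := by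
    rw [hmdef, hκdef]
    ring
  have h1 : 2 * m * ‖δ‖ ^ 2 ≤ 2 * ⟪Δ, δ⟫ - s * ‖Δ‖ ^ 2 := by
    linarith [hstep, hAM, f1, g1, g3, hm2]
  -- 1 - s * m ≥ 0
  have hN : 0 ≤ μ * (L - μ) ^ 2 + 2 * ρ * L * ((L - μ) * (L ^ 2 + μ * L + 2 * μ ^ 2))
      + ρ ^ 2 * μ * L ^ 2 * (L - μ) ^ 2 := by
    have h1' : (0:ℝ) ≤ L - μ := by linarith
    have h2' : (0:ℝ) ≤ L ^ 2 + μ * L + 2 * μ ^ 2 := by positivity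
    have ha : (0:ℝ) ≤ μ * (L - μ) ^ 2 := by positivity
    have hbb : (0:ℝ) ≤ 2 * ρ * L * ((L - μ) * (L ^ 2 + μ * L + 2 * μ ^ 2)) :=
      mul_nonneg (by positivity) (mul_nonneg h1' h2')
    have hcc : (0:ℝ) ≤ ρ ^ 2 * μ * L ^ 2 * (L - μ) ^ 2 := by positivity
    linarith
  have hfrac : 1 / 2 - (2 / (μ + L) - t0) * m
      = (μ * (L - μ) ^ 2 + 2 * ρ * L * ((L - μ) * (L ^ 2 + μ * L + 2 * μ ^ 2))
        + ρ ^ 2 * μ * L ^ 2 * (L - μ) ^ 2) / (2 * (μ + L) ^ 2 * (μ + ρ * L ^ 2)) := by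
    rw [ht0def, hmdef]
    field_simp
    ring
  have hhalf : (2 / (μ + L) - t0) * m ≤ 1 / 2 := by
    have hd : (0:ℝ) < 2 * (μ + L) ^ 2 * (μ + ρ * L ^ 2) := by positivity
    have := div_nonneg hN hd.le
    linarith [hfrac ▸ this]
  have h1msm : 0 ≤ 1 - s * m := by
    have := mul_le_mul_of_nonneg_right hst hm0
    linarith
  have hfin : ‖δ - s • Δ‖ ^ 2 ≤ ((1 - s * m) * ‖δ‖) ^ 2 := by
    have hmul := mul_le_mul_of_nonneg_left h1 hs.le
    have expand : ((1 - s * m) * ‖δ‖) ^ 2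
        = ‖δ‖ ^ 2 - 2 * (s * (m * ‖δ‖ ^ 2)) + s ^ 2 * m ^ 2 * ‖δ‖ ^ 2 := by ring
    rw [hXn, expand]
    linarith [hmul, sq_nonneg (s * m * ‖δ‖), sq_nonneg s, sq_nonneg m]
  have hcoeff : 1 - (1 + μ * ρ) * γ * η * μ * L / (μ + L) = 1 - s * m := by
    rw [hsdef, hmdef]
    ring
  rw [hcoeff]
  have hRnn : 0 ≤ (1 - s * m) * ‖δ‖ := mul_nonneg h1msm (norm_nonneg _)
  exact (pow_le_pow_iff_left₀ (norm_nonneg _) hRnn two_ne_zero).1 hfin
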